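/- arXiv:1507.02546 — 6 statements merged into one kernel-verified Lean document; each statement's English description precedes it below -/
import Mathlib

section
/- Let G be a finite connected simple graph with ε ≥ 1 edges and let Γ_G be its edge-set graph. Then the maximum degree of Γ_G equals 2(2^{ε−1} − 1), i.e., Δ(Γ_G) = 2^ε − 2. -/
open scoped Classical

/-- Two edges (as elements of `Sym2 V`) are *adjacent* if they are distinct and
share a common endpoint. -/
def EdgeAdj {V : Type*} (e f : Sym2 V) : Prop := e ≠ f ∧ ∃ v, v ∈ e ∧ v ∈ f

lemma EdgeAdj.symm {V : Type*} {e f : Sym2 V} (h : EdgeAdj e f) : EdgeAdj f e :=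
  ⟨h.1.symm, h.2.elim fun v hv => ⟨v, hv.2, hv.1⟩⟩

/-- The *edge-set graph* of a simple graph `G`: its vertices are the nonempty
(finite) subsets of the edge set of `G`, two distinct such subsets being adjacent
if and only if some edge in the first is adjacent to some edge in the second. -/
def edgeSetGraph {V : Type*} (G : SimpleGraph V) :
    SimpleGraph {S : Finset (Sym2 V) // ↑S ⊆ G.edgeSet ∧ S.Nonempty} where
  Adj A B := A ≠ B ∧ ∃ e ∈ A.1, ∃ f ∈ B.1, EdgeAdj e f
  symm := by
    constructor
    rintro A B ⟨hAB, e, he, f, hf, hef⟩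
    exact ⟨hAB.symm, f, hf, e, he, hef.symm⟩
  loopless := by constructor; rintro A ⟨h, -⟩; exact h rfl

private lemma walk_stays {V : Type*} (G : SimpleGraph V) (e : Sym2 V)
    (h : ∀ g ∈ G.edgeSet, g ≠ e → ∀ w ∈ g, w ∉ e) :
    ∀ (w x : V), G.Walk w x → w ∈ e → x ∈ e := by
  intro w x p
  induction p with
  | nil => exact fun h => h
  | @cons a b c hab p ih =>
    intro ha
    apply ih
    have hg : s(a, b) ∈ G.edgeSet := hab
    by_cases hge : s(a, b) = e
    · rw [← hge]; exact Sym2.mem_mk_right a b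
    · exact absurd ha (h _ hg hge a (Sym2.mem_mk_left a b))

private lemma exists_edgeAdj {V : Type*} (G : SimpleGraph V) (hconn : G.Connected)
    [Fintype G.edgeSet] (hE : 2 ≤ G.edgeFinset.card) :
    ∀ e ∈ G.edgeSet, ∃ g ∈ G.edgeSet, EdgeAdj e g := by
  intro e he
  by_contra hne
  push_neg at hne
  have hkey : ∀ g ∈ G.edgeSet, g ≠ e → ∀ w ∈ g, w ∉ e := by
    intro g hg hge w hwg hwe
    exact hne g hg ⟨Ne.symm hge, w, hwe, hwg⟩
  obtain ⟨f, hf, hfe⟩ : ∃ f ∈ G.edgeFinset, f ≠ e := by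
    have : 1 < G.edgeFinset.card := hE
    obtain ⟨a, ha, b, hb, hab⟩ := Finset.one_lt_card.mp this
    by_cases hae : a = e
    · exact ⟨b, hb, by rw [← hae]; exact hab.symm⟩
    · exact ⟨a, ha, hae⟩
  rw [SimpleGraph.mem_edgeFinset] at hf
  induction e with
  | h u v =>
    induction f with
    | h x y =>
      have hue : u ∈ s(u, v) := Sym2.mem_mk_left u v
      have hxf : x ∈ s(x, y) := Sym2.mem_mk_left x y
      have hxe : x ∉ s(u, v) := fun hx => hkey _ hf hfe x hxf hx
      obtain ⟨p⟩ := hconn.preconnected u x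
      exact hxe (walk_stays G s(u, v) hkey u x p hue)

/-- For a finite connected simple graph `G` with `ε ≥ 1` edges, the maximum degree
of the edge-set graph `Γ_G` equals `2(2^(ε-1) - 1) = 2^ε - 2`. -/
theorem stmt_1 {V : Type*} [Fintype V] (G : SimpleGraph V) (hconn : G.Connected)
    (hE : 1 ≤ G.edgeFinset.card) :
    (edgeSetGraph G).maxDegree = 2 * (2 ^ (G.edgeFinset.card - 1) - 1) := by
  set ε := G.edgeFinset.card with hεdef
  -- the vertex corresponding to the full edge set
  have hsub : ↑G.edgeFinset ⊆ G.edgeSet := by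
    intro e he
    rw [Finset.mem_coe, SimpleGraph.mem_edgeFinset] at he
    exact he
  have hne : G.edgeFinset.Nonempty := Finset.card_pos.mp hE
  set A : {S : Finset (Sym2 V) // ↑S ⊆ G.edgeSet ∧ S.Nonempty} := ⟨G.edgeFinset, hsub, hne⟩
    with hA
  -- cardinality of vertex type
  have hcard : Fintype.card {S : Finset (Sym2 V) // ↑S ⊆ G.edgeSet ∧ S.Nonempty}
      = 2 ^ ε - 1 := by
    rw [Fintype.card_subtype]
    have : (Finset.univ.filter fun S : Finset (Sym2 V) => ↑S ⊆ G.edgeSet ∧ S.Nonempty)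
        = G.edgeFinset.powerset.erase ∅ := by
      ext S
      simp only [Finset.mem_filter, Finset.mem_univ, true_and, Finset.mem_erase,
        Finset.mem_powerset, Finset.nonempty_iff_ne_empty]
      constructor
      · rintro ⟨h1, h2⟩
        refine ⟨h2, fun e he => ?_⟩
        rw [SimpleGraph.mem_edgeFinset]
        exact h1 he
      · rintro ⟨h1, h2⟩
        refine ⟨fun e he => ?_, h1⟩
        have := h2 (Finset.mem_coe.mp he)
        rwa [SimpleGraph.mem_edgeFinset] at this
    rw [this, Finset.card_erase_of_mem (by simp), Finset.card_powerset]
  -- A is adjacent to every other vertex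
  have hAdj : ∀ B, B ≠ A → (edgeSetGraph G).Adj A B := by
    intro B hBA
    refine ⟨hBA.symm, ?_⟩
    -- B is a proper nonempty subset, so ε ≥ 2
    have hBsub : B.1 ⊆ G.edgeFinset := by
      intro e he
      rw [SimpleGraph.mem_edgeFinset]
      exact B.2.1 he
    have hBne : B.1 ≠ G.edgeFinset := fun h => hBA (Subtype.ext h)
    have hss : B.1 ⊂ G.edgeFinset := lt_of_le_of_ne hBsub hBne
    obtain ⟨f, hfB⟩ := B.2.2
    have hε2 : 2 ≤ ε := by
      obtain ⟨g, hg, hgB⟩ := Finset.exists_of_ssubset hss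
      have : ({f, g} : Finset (Sym2 V)) ⊆ G.edgeFinset := by
        intro x hx
        rcases Finset.mem_insert.mp hx with h | h
        · subst h; exact hBsub hfB
        · rw [Finset.mem_singleton] at h; subst h; exact hg
      calc 2 = ({f, g} : Finset (Sym2 V)).card := by
              rw [Finset.card_insert_of_notMem (by
                  simp only [Finset.mem_singleton]
                  exact fun h => hgB (h ▸ hfB)),
                Finset.card_singleton]
        _ ≤ ε := Finset.card_le_card this
    obtain ⟨g, hg, hfg⟩ := exists_edgeAdj G hconn hε2 f (B.2.1 hfB)
    exact ⟨g, SimpleGraph.mem_edgeFinset.mpr hg, f, hfB, hfg.symm⟩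
  -- degree of A
  have hdeg : (edgeSetGraph G).degree A = 2 ^ ε - 2 := by
    have : (edgeSetGraph G).neighborFinset A = Finset.univ.erase A := by
      ext B
      rw [SimpleGraph.mem_neighborFinset, Finset.mem_erase]
      constructor
      · intro h
        exact ⟨((edgeSetGraph G).ne_of_adj h).symm, Finset.mem_univ _⟩
      · rintro ⟨h, -⟩
        exact hAdj B h
    rw [SimpleGraph.degree, this, Finset.card_erase_of_mem (Finset.mem_univ _),
      Finset.card_univ, hcard]
    have : 1 ≤ 2 ^ ε := Nat.one_le_two_pow
    omega
  have h1 : 1 ≤ 2 ^ (ε - 1) := Nat.one_le_two_pow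
  have h2 : 2 ^ (ε - 1) * 2 = 2 ^ ε := by
    rw [← pow_succ]
    congr 1
    omega
  have hmax_le : (edgeSetGraph G).maxDegree ≤ 2 ^ ε - 2 := by
    have hnonempty : Nonempty {S : Finset (Sym2 V) // ↑S ⊆ G.edgeSet ∧ S.Nonempty} := ⟨A⟩
    have := (edgeSetGraph G).maxDegree_lt_card_verts
    rw [hcard] at this
    have h3 : 1 ≤ 2 ^ ε := Nat.one_le_two_pow
    omega
  have hmax_ge : 2 ^ ε - 2 ≤ (edgeSetGraph G).maxDegree := by
    rw [← hdeg]
    exact (edgeSetGraph G).degree_le_maxDegree A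
  omega
end

section
/- Let G be a finite connected simple graph with ε ≥ 4 edges. If the edge-set graph Γ_G of G is a complete graph, then G is isomorphic to the star graph K_{1,ε}. -/
open scoped Classical

/-- The star graph `K_{1,n}`: one central vertex `0` joined to `n` leaves. -/
def starGraph (n : ℕ) : SimpleGraph (Fin (n + 1)) where
  Adj u v := u ≠ v ∧ (u = 0 ∨ v = 0)
  symm := by constructor; rintro u v ⟨h1, h2⟩; exact ⟨h1.symm, h2.symm⟩
  loopless := by constructor; rintro u ⟨h, -⟩; exact h rfl

/-- If `G` is a finite connected simple graph with `ε ≥ 4` edges whose edge-set graph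
is complete, then `G` is isomorphic to the star graph `K_{1,ε}`. -/
theorem stmt_4 {V : Type*} [Fintype V] (G : SimpleGraph V) (hconn : G.Connected)
    (hE : 4 ≤ G.edgeFinset.card) (hcomplete : edgeSetGraph G = ⊤) :
    Nonempty (G ≃g starGraph G.edgeFinset.card) := by
  classical
  -- Step 1: any two distinct edges are adjacent
  have hpair : ∀ e ∈ G.edgeSet, ∀ f ∈ G.edgeSet, e ≠ f → EdgeAdj e f := by
    intro e he f hf hef
    have hA : (↑({e} : Finset (Sym2 V)) : Set (Sym2 V)) ⊆ G.edgeSet ∧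
        ({e} : Finset (Sym2 V)).Nonempty := ⟨by simp [he], Finset.singleton_nonempty e⟩
    have hB : (↑({f} : Finset (Sym2 V)) : Set (Sym2 V)) ⊆ G.edgeSet ∧
        ({f} : Finset (Sym2 V)).Nonempty := ⟨by simp [hf], Finset.singleton_nonempty f⟩
    have hne : (⟨{e}, hA⟩ : {S : Finset (Sym2 V) // ↑S ⊆ G.edgeSet ∧ S.Nonempty}) ≠ ⟨{f}, hB⟩ := by
      simp [Subtype.ext_iff, hef]
    have hadj : (edgeSetGraph G).Adj ⟨{e}, hA⟩ ⟨{f}, hB⟩ := by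
      rw [hcomplete]; exact hne
    obtain ⟨-, e', he', f', hf', h⟩ := hadj
    simp only [Finset.mem_singleton] at he' hf'
    subst he'; subst hf'; exact h
  -- Step 2: find two distinct edges
  have h2 : 1 < G.edgeFinset.card := by omega
  obtain ⟨e1, he1, e2, he2, h12⟩ := Finset.one_lt_card.mp h2
  have hE1 : e1 ∈ G.edgeSet := SimpleGraph.mem_edgeFinset.1 he1
  have hE2 : e2 ∈ G.edgeSet := SimpleGraph.mem_edgeFinset.1 he2
  obtain ⟨-, c, hc1, hc2⟩ := hpair e1 hE1 e2 hE2 h12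
  obtain ⟨a, ha⟩ := Sym2.mem_iff_exists.mp hc1
  obtain ⟨b, hb⟩ := Sym2.mem_iff_exists.mp hc2
  have hac : a ≠ c := by
    rintro rfl
    exact G.not_isDiag_of_mem_edgeSet hE1 (by rw [ha]; exact Sym2.mk_isDiag_iff.2 rfl)
  have hbc : b ≠ c := by
    rintro rfl
    exact G.not_isDiag_of_mem_edgeSet hE2 (by rw [hb]; exact Sym2.mk_isDiag_iff.2 rfl)
  have hab : a ≠ b := by rintro rfl; exact h12 (ha.trans hb.symm)
  -- Step 3: c is in every edge
  have hcenter : ∀ e ∈ G.edgeSet, c ∈ e := by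
    by_contra hcon
    push_neg at hcon
    obtain ⟨f, hf, hcf⟩ := hcon
    have key : ∀ g ∈ G.edgeSet, c ∉ g → g = s(a, b) := by
      intro g hg hcg
      have hga : a ∈ g := by
        have hne1 : e1 ≠ g := by rintro rfl; exact hcg hc1
        obtain ⟨v, hv1, hvg⟩ := (hpair e1 hE1 g hg hne1).2
        rw [ha, Sym2.mem_iff] at hv1
        rcases hv1 with rfl | rfl
        · exact absurd hvg hcg
        · exact hvg
      have hgb : b ∈ g := by
        have hne2 : e2 ≠ g := by rintro rfl; exact hcg hc2
        obtain ⟨v, hv2, hvg⟩ := (hpair e2 hE2 g hg hne2).2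
        rw [hb, Sym2.mem_iff] at hv2
        rcases hv2 with rfl | rfl
        · exact absurd hvg hcg
        · exact hvg
      exact (Sym2.mem_and_mem_iff hab).mp ⟨hga, hgb⟩
    have hfE : f ∈ G.edgeFinset := SimpleGraph.mem_edgeFinset.2 hf
    obtain ⟨g, hg, hgnot⟩ : ∃ g ∈ G.edgeFinset, g ∉ ({e1, e2, f} : Finset (Sym2 V)) := by
      by_contra h
      push_neg at h
      have hsub : G.edgeFinset ⊆ {e1, e2, f} := h
      have h1 := Finset.card_le_card hsub
      have h3 : ({e1, e2, f} : Finset (Sym2 V)).card ≤ 3 := by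
        refine (Finset.card_insert_le _ _).trans ?_
        refine Nat.succ_le_succ ((Finset.card_insert_le _ _).trans ?_)
        simp
      omega
    simp only [Finset.mem_insert, Finset.mem_singleton, not_or] at hgnot
    obtain ⟨hge1, hge2, hgef⟩ := hgnot
    have hgE : g ∈ G.edgeSet := SimpleGraph.mem_edgeFinset.1 hg
    by_cases hcg : c ∈ g
    · have hfg : EdgeAdj g f := hpair g hgE f hf hgef
      obtain ⟨v, hvg, hvf⟩ := hfg.2
      rw [key f hf hcf, Sym2.mem_iff] at hvf
      rcases hvf with rfl | rfl
      · exact hge1 (((Sym2.mem_and_mem_iff hac).mp ⟨hvg, hcg⟩).trans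
          (by rw [ha, Sym2.eq_swap]))
      · exact hge2 (((Sym2.mem_and_mem_iff hbc).mp ⟨hvg, hcg⟩).trans
          (by rw [hb, Sym2.eq_swap]))
    · exact hgef ((key g hgE hcg).trans (key f hf hcf).symm)
  -- Step 4: every other vertex is adjacent to c
  have hadjc : ∀ v, v ≠ c → G.Adj c v := by
    intro v hv
    obtain ⟨p⟩ := hconn v c
    cases p with
    | nil => exact absurd rfl hv
    | @cons _ w _ h q =>
      have hm : c ∈ s(v, w) := hcenter _ (G.mem_edgeSet.2 h)
      rw [Sym2.mem_iff] at hm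
      rcases hm with rfl | rfl
      · exact absurd rfl hv
      · exact h.symm
  have hAdjIff : ∀ u v, G.Adj u v ↔ u ≠ v ∧ (u = c ∨ v = c) := by
    intro u v
    constructor
    · intro h
      refine ⟨h.ne, ?_⟩
      have hm : c ∈ s(u, v) := hcenter _ (G.mem_edgeSet.2 h)
      rw [Sym2.mem_iff] at hm
      tauto
    · rintro ⟨huv, hc | hc⟩
      · subst hc; exact hadjc v (Ne.symm huv)
      · subst hc; exact (hadjc u huv).symm
  -- Step 5: count edges
  have himg : G.edgeFinset = (Finset.univ.erase c).image (fun x => s(c, x)) := by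
    ext e
    simp only [SimpleGraph.mem_edgeFinset, Finset.mem_image, Finset.mem_erase,
      Finset.mem_univ, and_true]
    constructor
    · intro he
      obtain ⟨x, hx⟩ := Sym2.mem_iff_exists.mp (hcenter e he)
      refine ⟨x, ?_, hx.symm⟩
      rintro rfl
      exact G.not_isDiag_of_mem_edgeSet he (by rw [hx]; exact Sym2.mk_isDiag_iff.2 rfl)
    · rintro ⟨x, hx, rfl⟩
      exact G.mem_edgeSet.2 (hadjc x hx)
  have hn : G.edgeFinset.card = Fintype.card V - 1 := by
    rw [himg, Finset.card_image_of_injOn (fun x _ y _ hxy => Sym2.congr_right.mp hxy),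
      Finset.card_erase_of_mem (Finset.mem_univ c), Finset.card_univ]
  have hpos : 0 < Fintype.card V := Fintype.card_pos_iff.2 ⟨c⟩
  have hcard : Fintype.card V = G.edgeFinset.card + 1 := by omega
  -- Step 6: build the isomorphism
  let ψ := Fintype.equivFinOfCardEq hcard
  let φ := ψ.trans (Equiv.swap (ψ c) 0)
  have hφc : φ c = 0 := by simp [φ, Equiv.swap_apply_left]
  have h0 : ∀ x, φ x = 0 ↔ x = c := fun x => by
    rw [← hφc]; exact EmbeddingLike.apply_eq_iff_eq φ
  refine ⟨⟨φ, ?_⟩⟩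
  intro u v
  show (φ u ≠ φ v ∧ (φ u = 0 ∨ φ v = 0)) ↔ G.Adj u v
  rw [hAdjIff u v, h0, h0, Ne, Ne, EmbeddingLike.apply_eq_iff_eq]
end

section
/- Let G be a finite connected simple graph with ε ≥ 2 edges, let X be a connected edge dominating set of G, and let Γ_G be the edge-set graph of G. Then every vertex of Γ_G corresponding to an edge-subset S with X ⊆ S has degree equal to the maximum degree Δ(Γ_G); equivalently, every such vertex is adjacent in Γ_G to all other vertices. -/
open scoped Classical

/-- The edge set `X` induces a connected subgraph: the graph on the endpoints of
edges of `X`, with edge set `X`, is connected. -/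
def IsConnectedEdgeSet {V : Type*} (X : Set (Sym2 V)) : Prop :=
  ((SimpleGraph.fromEdgeSet X).induce {v | ∃ e ∈ X, v ∈ e}).Connected

/-- `X` is a *connected edge dominating set* of `G`: a set of edges of `G` such that
every edge of `G` not in `X` is adjacent to some edge of `X`, and the subgraph of `G`
induced by the edge set `X` is connected. -/
def IsCEDS {V : Type*} (G : SimpleGraph V) (X : Finset (Sym2 V)) : Prop :=
  ↑X ⊆ G.edgeSet ∧ (∀ e ∈ G.edgeSet, e ∉ X → ∃ f ∈ X, EdgeAdj e f) ∧
    IsConnectedEdgeSet (X : Set (Sym2 V))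

/-- `X` is a connected edge dominating set of `G` of minimum cardinality. -/
def IsMinCEDS {V : Type*} (G : SimpleGraph V) (X : Finset (Sym2 V)) : Prop :=
  IsCEDS G X ∧ ∀ Y : Finset (Sym2 V), IsCEDS G Y → X.card ≤ Y.card

lemma aux_adj {V : Type*} {X : Set (Sym2 V)} (hc : IsConnectedEdgeSet X)
    {f g : Sym2 V} (hf : f ∈ X) (hg : g ∈ X) (hne : g ≠ f) :
    ∃ e ∈ X, EdgeAdj e f := by
  by_contra hno
  push_neg at hno
  have hshare : ∀ e ∈ X, ∀ v, v ∈ e → v ∈ f → e = f := by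
    intro e he v hve hvf
    by_contra hef
    exact hno e he ⟨hef, v, hve, hvf⟩
  set U : Set V := {v | ∃ e ∈ X, v ∈ e} with hU
  have key : ∀ (u v : U),
      ((SimpleGraph.fromEdgeSet X).induce U).Walk u v → (u : V) ∈ f → (v : V) ∈ f := by
    intro u v p
    induction p with
    | nil => exact id
    | cons h p ih =>
      rename_i a b c
      intro ha
      apply ih
      have h' : (SimpleGraph.fromEdgeSet X).Adj a b := h
      rw [SimpleGraph.fromEdgeSet_adj] at h'
      have : s((a : V), (b : V)) = f := hshare _ h'.1 _ (Sym2.mem_mk_left _ _) ha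
      rw [← this]
      exact Sym2.mem_mk_right _ _
  obtain ⟨a, ha⟩ : ∃ a, a ∈ f := by
    induction f using Sym2.ind with
    | _ x y => exact ⟨x, Sym2.mem_mk_left _ _⟩
  obtain ⟨w, hw⟩ : ∃ w, w ∈ g ∧ w ∉ f := by
    by_contra hall
    push_neg at hall
    induction g using Sym2.ind with
    | _ x y =>
      exact hno _ hg ⟨hne, x, Sym2.mem_mk_left _ _, hall x (Sym2.mem_mk_left _ _)⟩
  have haU : a ∈ U := ⟨f, hf, ha⟩
  have hwU : w ∈ U := ⟨g, hg, hw.1⟩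
  obtain ⟨p⟩ := hc.preconnected ⟨a, haU⟩ ⟨w, hwU⟩
  exact hw.2 (key _ _ p ha)

/-- Let `X` be a connected edge dominating set of a finite connected simple graph `G`
with `ε ≥ 2` edges.  Then every vertex of the edge-set graph `Γ_G` corresponding to an
edge-subset `S ⊇ X` has degree `Δ(Γ_G)`; equivalently, every such vertex is adjacent
to all other vertices of `Γ_G`. -/
theorem stmt_7 {V : Type*} [Fintype V] (G : SimpleGraph V) (hconn : G.Connected)
    (hE : 2 ≤ G.edgeFinset.card) (X : Finset (Sym2 V)) (hX : IsCEDS G X)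
    (S : {S : Finset (Sym2 V) // ↑S ⊆ G.edgeSet ∧ S.Nonempty}) (hXS : X ⊆ S.1) :
    (edgeSetGraph G).degree S = (edgeSetGraph G).maxDegree ∧
      ∀ T, T ≠ S → (edgeSetGraph G).Adj S T := by
  obtain ⟨hXE, hdom, hcX⟩ := hX
  have hadj : ∀ T, T ≠ S → (edgeSetGraph G).Adj S T := by
    intro T hT
    refine ⟨hT.symm, ?_⟩
    by_cases hcase : ∃ f ∈ T.1, f ∉ X
    · obtain ⟨f, hfT, hfX⟩ := hcase
      obtain ⟨g, hgX, hfg⟩ := hdom f (T.2.1 (by exact_mod_cast hfT)) hfX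
      exact ⟨g, hXS hgX, f, hfT, hfg.symm⟩
    · push_neg at hcase
      -- T.1 ⊆ X
      obtain ⟨f, hfT⟩ := T.2.2
      have hfX : f ∈ X := hcase f hfT
      by_cases hg : ∃ g ∈ X, g ≠ f
      · obtain ⟨g, hgX, hgf⟩ := hg
        obtain ⟨e, heX, hef⟩ := aux_adj hcX (by exact_mod_cast hfX)
          (by exact_mod_cast hgX) hgf
        exact ⟨e, hXS (by exact_mod_cast heX), f, hfT, hef⟩
      · push_neg at hg
        -- X = {f}, hence T.1 = {f}
        have hT1 : T.1 = {f} := by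
          apply Finset.eq_singleton_iff_nonempty_unique_mem.mpr
          exact ⟨⟨f, hfT⟩, fun x hx => hg x (hcase x hx)⟩
        have hTS : T.1 ⊆ S.1 := by
          intro x hx; exact hXS (hcase x hx)
        have hne' : T.1 ≠ S.1 := fun h => hT (Subtype.ext h)
        obtain ⟨e, heS, heT⟩ := Finset.exists_of_ssubset (lt_of_le_of_ne hTS hne')
        have heX : e ∉ X := by
          intro h; exact heT (by rw [hT1]; simp [hg e h])
        obtain ⟨g, hgX, heg⟩ := hdom e (S.2.1 (by exact_mod_cast heS)) heX
        have : g = f := hg g hgX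
        exact ⟨e, heS, f, hfT, this ▸ heg⟩
  refine ⟨?_, hadj⟩
  -- degree part
  have hnbr : (edgeSetGraph G).neighborFinset S = Finset.univ.erase S := by
    ext T
    simp only [SimpleGraph.mem_neighborFinset, Finset.mem_erase, Finset.mem_univ, and_true]
    constructor
    · intro h; exact ((edgeSetGraph G).ne_of_adj h).symm
    · intro h; exact hadj T h
  have hdeg : (edgeSetGraph G).degree S =
      Fintype.card {S : Finset (Sym2 V) // ↑S ⊆ G.edgeSet ∧ S.Nonempty} - 1 := by
    rw [SimpleGraph.degree, hnbr, Finset.card_erase_of_mem (Finset.mem_univ S),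
      Finset.card_univ]
  refine le_antisymm ((edgeSetGraph G).degree_le_maxDegree S) ?_
  apply SimpleGraph.maxDegree_le_of_forall_degree_le
  intro v
  rw [hdeg]
  exact Nat.le_sub_one_of_lt ((edgeSetGraph G).degree_lt_card_verts v)
end

section
/- Let G be a finite simple graph with ε edges and let e_i be an edge of G with edge-degree d(e_i). Then the vertex of the edge-set graph Γ_G corresponding to the singleton subset {e_i} has degree 2^ε − 2^{ε − d(e_i)} in Γ_G. -/
open scoped Classical

/-- The *edge-degree* of an edge `e` of `G`: the number of edges of `G` adjacent
to `e` (for `e = uv ∈ E(G)` this equals `d_G(u) + d_G(v) - 2`). -/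
noncomputable def edgeDegree {V : Type*} [Fintype V] (G : SimpleGraph V) (e : Sym2 V) : ℕ :=
  (G.edgeFinset.filter (fun f => EdgeAdj e f)).card

/-- For a finite simple graph `G` with `ε` edges and an edge `e` of `G` of
edge-degree `d(e)`, the vertex of the edge-set graph `Γ_G` corresponding to the
singleton `{e}` has degree `2^ε - 2^(ε - d(e))` in `Γ_G`. -/
theorem stmt_15 {V : Type*} [Fintype V] (G : SimpleGraph V)
    (e : Sym2 V) (he : e ∈ G.edgeSet) :
    (edgeSetGraph G).degree ⟨{e}, by simpa using he, Finset.singleton_nonempty e⟩ =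
      2 ^ G.edgeFinset.card - 2 ^ (G.edgeFinset.card - edgeDegree G e) := by
  classical
  set D := G.edgeFinset.filter (fun f => EdgeAdj e f) with hD
  have hDsub : D ⊆ G.edgeFinset := Finset.filter_subset _ _
  set A : {S : Finset (Sym2 V) // ↑S ⊆ G.edgeSet ∧ S.Nonempty} :=
    ⟨{e}, by simpa using he, Finset.singleton_nonempty e⟩ with hA
  have hadj : ∀ B, (edgeSetGraph G).Adj A B ↔ (B.1 ∩ D).Nonempty := by
    intro B
    constructor
    · rintro ⟨hne, f, hf, g, hg, hfg⟩
      simp only [hA, Finset.mem_singleton] at hf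
      subst hf
      refine ⟨g, Finset.mem_inter.2 ⟨hg, ?_⟩⟩
      exact Finset.mem_filter.2 ⟨SimpleGraph.mem_edgeFinset.2 (B.2.1 hg), hfg⟩
    · rintro ⟨g, hg⟩
      rcases Finset.mem_inter.1 hg with ⟨hgB, hgD⟩
      have hfg : EdgeAdj e g := (Finset.mem_filter.1 hgD).2
      refine ⟨?_, e, by simp [hA], g, hgB, hfg⟩
      rintro rfl
      simp only [hA, Finset.mem_singleton] at hgB
      exact hfg.1 hgB.symm
  have hcard : (edgeSetGraph G).degree A =
      (G.edgeFinset.powerset.filter (fun B => (B ∩ D).Nonempty)).card := by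
    rw [SimpleGraph.degree]
    refine Finset.card_bij (fun B _ => (B : Finset (Sym2 V))) ?_ ?_ ?_
    · intro B hB
      rw [SimpleGraph.mem_neighborFinset, hadj] at hB
      refine Finset.mem_filter.2 ⟨Finset.mem_powerset.2 ?_, hB⟩
      intro x hx
      exact SimpleGraph.mem_edgeFinset.2 (B.2.1 hx)
    · intro B₁ _ B₂ _ h
      exact Subtype.ext h
    · intro B hB
      rcases Finset.mem_filter.1 hB with ⟨hBp, hBne⟩
      have hBsub : ↑B ⊆ G.edgeSet := by
        intro x hx
        exact SimpleGraph.mem_edgeFinset.1 (Finset.mem_powerset.1 hBp hx)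
      have hne : B.Nonempty := by
        rcases hBne with ⟨x, hx⟩
        exact ⟨x, (Finset.mem_inter.1 hx).1⟩
      refine ⟨⟨B, hBsub, hne⟩, ?_, rfl⟩
      rw [SimpleGraph.mem_neighborFinset, hadj]
      exact hBne
  rw [hcard]
  have hcompl : G.edgeFinset.powerset.filter (fun B => ¬ (B ∩ D).Nonempty) =
      (G.edgeFinset \ D).powerset := by
    ext B
    simp only [Finset.mem_filter, Finset.mem_powerset, Finset.not_nonempty_iff_eq_empty,
      ← Finset.disjoint_iff_inter_eq_empty, Finset.subset_sdiff]
  have := Finset.card_filter_add_card_filter_not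
    (s := G.edgeFinset.powerset) (p := fun B => (B ∩ D).Nonempty)
  rw [hcompl, Finset.card_powerset, Finset.card_powerset, Finset.card_sdiff_of_subset hDsub] at this
  have hdd : edgeDegree G e = D.card := rfl
  rw [hdd]
  omega
end

section
/- Let G be a finite connected r-regular simple graph on ν vertices with r ≥ 2, so that G has ε = rν/2 edges. Then in the edge-set graph Γ_G, every vertex corresponding to a singleton subset {e}, e ∈ E(G), has the same degree, equal to 2^{rν/2} − 2^{rν/2 − 2(r−1)}, and this common value equals the minimum degree δ(Γ_G). -/
open scoped Classical

lemma count_aux {V : Type*} (E N : Finset (Sym2 V)) (hN : N ⊆ E) :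
    (E.powerset.filter fun T => (T ∩ N).Nonempty).card = 2 ^ E.card - 2 ^ (E.card - N.card) := by
  have hsplit := Finset.card_filter_add_card_filter_not
    (s := E.powerset) (p := fun T => (T ∩ N).Nonempty)
  have heq : (E.powerset.filter fun T => ¬ (T ∩ N).Nonempty) = (E \ N).powerset := by
    ext T
    simp [Finset.mem_powerset, Finset.subset_sdiff, Finset.not_nonempty_iff_eq_empty,
      ← Finset.disjoint_iff_inter_eq_empty]
  rw [heq] at hsplit
  rw [Finset.card_powerset, Finset.card_powerset, Finset.card_sdiff_of_subset hN] at hsplit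
  omega

lemma degree_eq {V : Type*} [Fintype V] (G : SimpleGraph V)
    (A : {S : Finset (Sym2 V) // ↑S ⊆ G.edgeSet ∧ S.Nonempty}) :
    (edgeSetGraph G).degree A =
      (G.edgeFinset.powerset.filter fun T => T ≠ A.1 ∧
        (T ∩ (G.edgeFinset.filter fun f => ∃ e ∈ A.1, EdgeAdj e f)).Nonempty).card := by
  rw [← SimpleGraph.card_neighborFinset_eq_degree]
  apply Finset.card_bij (fun B _ => B.1)
  · rintro B hB
    rw [SimpleGraph.mem_neighborFinset] at hB
    obtain ⟨hAB, e, he, f, hf, hef⟩ := hB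
    have hsub : B.1 ⊆ G.edgeFinset := fun x hx => by
      rw [SimpleGraph.mem_edgeFinset]; exact B.2.1 hx
    refine Finset.mem_filter.2 ⟨Finset.mem_powerset.2 hsub, ?_, ⟨f, Finset.mem_inter.2 ⟨hf, ?_⟩⟩⟩
    · exact fun h => hAB (Subtype.ext h.symm)
    · exact Finset.mem_filter.2 ⟨hsub hf, e, he, hef⟩
  · rintro B _ C _ h
    exact Subtype.ext h
  · rintro T hT
    rw [Finset.mem_filter, Finset.mem_powerset] at hT
    obtain ⟨hsub, hne, f, hf⟩ := hT
    rw [Finset.mem_inter, Finset.mem_filter] at hf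
    obtain ⟨hfT, -, e, he, hef⟩ := hf
    refine ⟨⟨T, ?_, ⟨f, hfT⟩⟩, ?_, rfl⟩
    · intro x hx
      exact SimpleGraph.mem_edgeFinset.1 (hsub hx)
    · rw [SimpleGraph.mem_neighborFinset]
      exact ⟨fun h => hne (congrArg Subtype.val h).symm, e, he, f, hfT, hef⟩

lemma card_edgeAdj {V : Type*} [Fintype V] (G : SimpleGraph V) {r : ℕ}
    (hreg : G.IsRegularOfDegree r) {e : Sym2 V} (he : e ∈ G.edgeSet) :
    (G.edgeFinset.filter fun f => EdgeAdj e f).card = 2 * r - 2 := by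
  induction e with
  | _ u v =>
  rw [SimpleGraph.mem_edgeSet] at he
  have huv : u ≠ v := he.ne
  have hinter : G.incidenceFinset u ∩ G.incidenceFinset v = {s(u, v)} := by
    classical
    rw [SimpleGraph.incidenceFinset, SimpleGraph.incidenceFinset, ← Set.toFinset_inter,
      Set.toFinset_congr (G.incidenceSet_inter_incidenceSet_of_adj he), Set.toFinset_singleton]
  have hfeq : (G.edgeFinset.filter fun f => EdgeAdj s(u, v) f) =
      (G.incidenceFinset u ∪ G.incidenceFinset v).erase s(u, v) := by
    ext f
    rw [Finset.mem_filter]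
    simp only [Finset.mem_filter, Finset.mem_erase, Finset.mem_union,
      SimpleGraph.mem_incidenceFinset, SimpleGraph.mem_edgeFinset, EdgeAdj,
      SimpleGraph.mk'_mem_incidenceSet_iff]
    constructor
    · rintro ⟨hfE, hne, w, hw1, hw2⟩
      refine ⟨fun h => hne h.symm, ?_⟩
      rw [Sym2.mem_iff] at hw1
      rcases hw1 with rfl | rfl
      · left; exact ⟨hfE, hw2⟩
      · right; exact ⟨hfE, hw2⟩
    · rintro ⟨hne, h | h⟩
      · exact ⟨h.1, fun h' => hne h'.symm, u, Sym2.mem_mk_left u v, h.2⟩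
      · exact ⟨h.1, fun h' => hne h'.symm, v, Sym2.mem_mk_right u v, h.2⟩
  rw [hfeq]
  have hmem : s(u, v) ∈ G.incidenceFinset u ∪ G.incidenceFinset v := by
    rw [Finset.mem_union, SimpleGraph.mem_incidenceFinset]
    exact Or.inl ⟨he, Sym2.mem_mk_left u v⟩
  rw [Finset.card_erase_of_mem hmem]
  have hcu := Finset.card_union_add_card_inter (G.incidenceFinset u) (G.incidenceFinset v)
  rw [hinter, Finset.card_singleton, G.card_incidenceFinset_eq_degree,
    G.card_incidenceFinset_eq_degree, hreg u, hreg v] at hcu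
  omega

/-- Let `G` be a finite connected `r`-regular simple graph on `ν` vertices, `r ≥ 2`,
so that `G` has `ε = rν/2` edges.  In the edge-set graph `Γ_G`, every vertex
corresponding to a singleton `{e}`, `e ∈ E(G)`, has the same degree
`2^(rν/2) - 2^(rν/2 - 2(r-1))`, and this common value is the minimum degree
`δ(Γ_G)`. -/
theorem stmt_16 {V : Type*} [Fintype V] (G : SimpleGraph V) (hconn : G.Connected)
    (r : ℕ) (hr : 2 ≤ r) (hreg : G.IsRegularOfDegree r) :
    G.edgeFinset.card = r * Fintype.card V / 2 ∧
    ∀ e (he : e ∈ G.edgeSet),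
      (edgeSetGraph G).degree ⟨{e}, by simpa using he, Finset.singleton_nonempty e⟩ =
        2 ^ (r * Fintype.card V / 2) -
          2 ^ (r * Fintype.card V / 2 - 2 * (r - 1)) ∧
      (edgeSetGraph G).degree ⟨{e}, by simpa using he, Finset.singleton_nonempty e⟩ =
        (edgeSetGraph G).minDegree := by
  have hsum : 2 * G.edgeFinset.card = r * Fintype.card V := by
    rw [← G.sum_degrees_eq_twice_card_edges, Finset.sum_congr rfl fun v _ => hreg v,
      Finset.sum_const, Finset.card_univ, smul_eq_mul, mul_comm]
  have hcard : G.edgeFinset.card = r * Fintype.card V / 2 := by omega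
  refine ⟨hcard, fun e he => ?_⟩
  have heF : e ∈ G.edgeFinset := SimpleGraph.mem_edgeFinset.2 he
  have hNcard : ∀ f ∈ G.edgeSet,
      (G.edgeFinset.filter fun g => EdgeAdj f g).card = 2 * r - 2 :=
    fun f hf => card_edgeAdj G hreg hf
  have hfnotmem : ∀ f, f ∉ G.edgeFinset.filter fun g => EdgeAdj f g := by
    intro f hf
    exact ((Finset.mem_filter.1 hf).2).1 rfl
  have hεbig : 2 * r - 1 ≤ G.edgeFinset.card := by
    have hsub : insert e (G.edgeFinset.filter fun g => EdgeAdj e g) ⊆ G.edgeFinset := by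
      intro x hx
      rcases Finset.mem_insert.1 hx with rfl | hx
      · exact heF
      · exact (Finset.mem_filter.1 hx).1
    have := Finset.card_le_card hsub
    rw [Finset.card_insert_of_notMem (hfnotmem e), hNcard e he] at this
    omega
  -- lower bound for the degree of an arbitrary vertex
  have hbound : ∀ B, 2 ^ G.edgeFinset.card - 2 ^ (G.edgeFinset.card - (2 * r - 2)) ≤
      (edgeSetGraph G).degree B := by
    intro B
    rw [degree_eq]
    set NB : Finset (Sym2 V) := G.edgeFinset.filter fun f => ∃ e ∈ B.1, EdgeAdj e f with hNB
    have hNBsub : NB ⊆ G.edgeFinset := Finset.filter_subset _ _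
    have hseteq : (G.edgeFinset.powerset.filter fun T => T ≠ B.1 ∧ (T ∩ NB).Nonempty) =
        (G.edgeFinset.powerset.filter fun T => (T ∩ NB).Nonempty).erase B.1 := by
      ext T
      simp only [Finset.mem_filter, Finset.mem_erase]
      tauto
    rw [hseteq]
    obtain ⟨e0, he0⟩ := B.2.2
    have he0S : e0 ∈ G.edgeSet := B.2.1 he0
    have hNe0sub : (G.edgeFinset.filter fun g => EdgeAdj e0 g) ⊆ NB := by
      intro x hx
      obtain ⟨hxE, hadj⟩ := Finset.mem_filter.1 hx
      exact Finset.mem_filter.2 ⟨hxE, e0, he0, hadj⟩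
    have hNBd : 2 * r - 2 ≤ NB.card := by
      have := Finset.card_le_card hNe0sub
      rw [hNcard e0 he0S] at this
      omega
    have hp0 : 2 ^ (G.edgeFinset.card - NB.card) ≤ 2 ^ (G.edgeFinset.card - (2 * r - 2)) :=
      Nat.pow_le_pow_right (by norm_num) (by omega)
    have hp1 : 2 ^ (G.edgeFinset.card - (2 * r - 2)) ≤ 2 ^ G.edgeFinset.card :=
      Nat.pow_le_pow_right (by norm_num) (by omega)
    by_cases hcase : (B.1 ∩ NB).Nonempty
    · obtain ⟨f, hf⟩ := hcase
      rw [Finset.mem_inter] at hf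
      have hfS : f ∈ G.edgeSet := B.2.1 hf.1
      have hins : insert f (G.edgeFinset.filter fun g => EdgeAdj f g) ⊆ NB := by
        intro x hx
        rcases Finset.mem_insert.1 hx with rfl | hx
        · exact hf.2
        · obtain ⟨hxE, hadj⟩ := Finset.mem_filter.1 hx
          exact Finset.mem_filter.2 ⟨hxE, f, hf.1, hadj⟩
      have hNBd1 : 2 * r - 2 + 1 ≤ NB.card := by
        have := Finset.card_le_card hins
        rw [Finset.card_insert_of_notMem (hfnotmem f), hNcard f hfS] at this
        omega
      have hq0 : 2 ^ (G.edgeFinset.card - NB.card) ≤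
          2 ^ (G.edgeFinset.card - (2 * r - 2) - 1) :=
        Nat.pow_le_pow_right (by norm_num) (by omega)
      have hq1 : 2 ^ (G.edgeFinset.card - (2 * r - 2) - 1) * 2 =
          2 ^ (G.edgeFinset.card - (2 * r - 2)) := by
        rw [← pow_succ]
        congr 1
        omega
      have hq2 : 1 ≤ 2 ^ (G.edgeFinset.card - (2 * r - 2) - 1) := Nat.one_le_two_pow
      calc 2 ^ G.edgeFinset.card - 2 ^ (G.edgeFinset.card - (2 * r - 2))
          ≤ (2 ^ G.edgeFinset.card - 2 ^ (G.edgeFinset.card - NB.card)) - 1 := by omega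
        _ = (G.edgeFinset.powerset.filter fun T => (T ∩ NB).Nonempty).card - 1 := by
            rw [count_aux _ _ hNBsub]
        _ ≤ _ := Finset.pred_card_le_card_erase
    · have hnm : B.1 ∉ G.edgeFinset.powerset.filter fun T => (T ∩ NB).Nonempty := by
        intro h
        exact hcase (Finset.mem_filter.1 h).2
      rw [Finset.erase_eq_of_notMem hnm, count_aux _ _ hNBsub]
      omega
  -- degree of the singleton
  have hsingle : (edgeSetGraph G).degree
      ⟨{e}, by simpa using he, Finset.singleton_nonempty e⟩ =
      2 ^ G.edgeFinset.card - 2 ^ (G.edgeFinset.card - (2 * r - 2)) := by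
    rw [degree_eq]
    have hNA : (G.edgeFinset.filter fun f => ∃ e' ∈ ({e} : Finset (Sym2 V)), EdgeAdj e' f)
        = G.edgeFinset.filter fun g => EdgeAdj e g := by
      simp
    rw [hNA]
    have hseteq : (G.edgeFinset.powerset.filter fun T => T ≠ ({e} : Finset (Sym2 V)) ∧
        (T ∩ (G.edgeFinset.filter fun g => EdgeAdj e g)).Nonempty) =
        G.edgeFinset.powerset.filter fun T =>
          (T ∩ (G.edgeFinset.filter fun g => EdgeAdj e g)).Nonempty := by
      ext T
      simp only [Finset.mem_filter, and_assoc]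
      refine ⟨fun h => ⟨h.1, h.2.2⟩, fun h => ⟨h.1, ?_, h.2⟩⟩
      rintro rfl
      obtain ⟨f, hf⟩ := h.2
      rw [Finset.mem_inter, Finset.mem_singleton] at hf
      obtain ⟨hfe, hf2⟩ := hf
      rw [hfe] at hf2
      exact hfnotmem e hf2
    rw [hseteq, count_aux _ _ (Finset.filter_subset _ _), hNcard e he]
  have hval : 2 ^ (r * Fintype.card V / 2) - 2 ^ (r * Fintype.card V / 2 - 2 * (r - 1))
      = 2 ^ G.edgeFinset.card - 2 ^ (G.edgeFinset.card - (2 * r - 2)) := by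
    rw [← hcard]
    congr 2
    omega
  refine ⟨by rw [hsingle, hval], ?_⟩
  haveI : Nonempty {S : Finset (Sym2 V) // ↑S ⊆ G.edgeSet ∧ S.Nonempty} :=
    ⟨⟨{e}, by simpa using he, Finset.singleton_nonempty e⟩⟩
  refine le_antisymm ?_ ((edgeSetGraph G).minDegree_le_degree _)
  rw [hsingle]
  exact SimpleGraph.le_minDegree_of_forall_le_degree _ _ fun B => hbound B
end

section
/- Let A be a finite set with |A| = n ≥ 1 and let G_{A^{(n)}} be its set-graph. Then every vertex v of G_{A^{(n)}} satisfies 2^{n−1} − 1 ≤ deg(v) ≤ 2(2^{n−1} − 1); moreover, the maximum degree of G_{A^{(n)}} equals twice its minimum degree, i.e., Δ(G_{A^{(n)}}) = 2·δ(G_{A^{(n)}}). -/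
open scoped Classical

/-- The *set-graph* of a finite nonempty set `A`: vertices are the nonempty subsets
of `A`, two distinct subsets being adjacent iff they have nonempty intersection. -/
def setGraph (A : Type*) : SimpleGraph {S : Finset A // S.Nonempty} where
  Adj S T := S ≠ T ∧ ∃ a, a ∈ S.1 ∧ a ∈ T.1
  symm := by
    constructor
    rintro S T ⟨hST, a, ha1, ha2⟩
    exact ⟨hST.symm, a, ha2, ha1⟩
  loopless := by constructor; rintro S ⟨h, -⟩; exact h rfl

lemma setGraph_degree {A : Type*} [Fintype A] (v : {S : Finset A // S.Nonempty}) :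
    (setGraph A).degree v =
      2 ^ Fintype.card A - 2 ^ (Fintype.card A - v.1.card) - 1 := by
  classical
  have hcard : ((setGraph A).neighborFinset v).card
      = (Finset.univ.filter fun T : Finset A => T ≠ v.1 ∧ (v.1 ∩ T).Nonempty).card := by
    apply Finset.card_bij (fun T _ => T.1)
    · rintro T hT
      rw [SimpleGraph.mem_neighborFinset] at hT
      obtain ⟨hne, a, ha1, ha2⟩ := hT
      simp only [Finset.mem_filter, Finset.mem_univ, true_and]
      constructor
      · intro h; exact hne (Subtype.ext h.symm)
      · exact ⟨a, Finset.mem_inter.2 ⟨ha1, ha2⟩⟩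
    · intro T₁ h₁ T₂ h₂ h
      exact Subtype.ext h
    · intro T hT
      simp only [Finset.mem_filter, Finset.mem_univ, true_and] at hT
      obtain ⟨hne, a, ha⟩ := hT
      rw [Finset.mem_inter] at ha
      refine ⟨⟨T, ⟨a, ha.2⟩⟩, ?_, rfl⟩
      rw [SimpleGraph.mem_neighborFinset]
      exact ⟨fun h => hne (congrArg Subtype.val h).symm, a, ha.1, ha.2⟩
  rw [SimpleGraph.degree, hcard]
  have hfe : (Finset.univ.filter fun T : Finset A => T ≠ v.1 ∧ (v.1 ∩ T).Nonempty)
      = (Finset.univ.filter fun T : Finset A => (v.1 ∩ T).Nonempty).erase v.1 := by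
    ext T
    simp [Finset.mem_erase, and_comm]
  have hmem : v.1 ∈ (Finset.univ.filter fun T : Finset A => (v.1 ∩ T).Nonempty) := by
    simp [Finset.inter_self, v.2]
  have hP : (Finset.univ.filter fun T : Finset A => (v.1 ∩ T).Nonempty).card
      = 2 ^ Fintype.card A - 2 ^ (Fintype.card A - v.1.card) := by
    have hcompl : (Finset.univ.filter fun T : Finset A => ¬(v.1 ∩ T).Nonempty)
        = (v.1ᶜ).powerset := by
      ext T
      simp only [Finset.mem_filter, Finset.mem_univ, true_and, Finset.mem_powerset,
        Finset.not_nonempty_iff_eq_empty, ← Finset.disjoint_iff_inter_eq_empty,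
        Finset.subset_compl_comm]
      exact le_compl_iff_disjoint_left.symm
    have := Finset.card_filter_add_card_filter_not
      (s := (Finset.univ : Finset (Finset A))) (p := fun T => (v.1 ∩ T).Nonempty)
    rw [hcompl, Finset.card_powerset, Finset.card_compl, Finset.card_univ,
      Fintype.card_finset] at this
    omega
  rw [hfe, Finset.card_erase_of_mem hmem, hP]

/-- For a finite set `A` with `|A| = n ≥ 1`, every vertex `v` of the set-graph of `A`
satisfies `2^(n-1) - 1 ≤ deg v ≤ 2(2^(n-1) - 1)`; moreover the maximum degree of the
set-graph equals twice its minimum degree. -/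
theorem stmt_19 {A : Type*} [Fintype A] (hn : 1 ≤ Fintype.card A) :
    (∀ v : {S : Finset A // S.Nonempty},
      2 ^ (Fintype.card A - 1) - 1 ≤ (setGraph A).degree v ∧
        (setGraph A).degree v ≤ 2 * (2 ^ (Fintype.card A - 1) - 1)) ∧
    (setGraph A).maxDegree = 2 * (setGraph A).minDegree := by
  classical
  set n := Fintype.card A with hn'
  have h2 : 2 * 2 ^ (n - 1) = 2 ^ n := by
    rw [← pow_succ']
    congr 1
    omega
  have key : ∀ v : {S : Finset A // S.Nonempty},
      (setGraph A).degree v = 2 ^ n - 2 ^ (n - v.1.card) - 1 := fun v => setGraph_degree v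
  have hb : ∀ v : {S : Finset A // S.Nonempty},
      2 ^ (n - 1) - 1 ≤ (setGraph A).degree v ∧ (setGraph A).degree v ≤ 2 ^ n - 2 := by
    intro v
    have hk1 : 1 ≤ v.1.card := Finset.card_pos.2 v.2
    have hkn : v.1.card ≤ n := v.1.card_le_univ.trans_eq (by simp [hn'])
    have hmono : 2 ^ (n - v.1.card) ≤ 2 ^ (n - 1) :=
      Nat.pow_le_pow_right (by norm_num) (by omega)
    have h1 : 1 ≤ 2 ^ (n - v.1.card) := Nat.one_le_two_pow
    rw [key v]
    omega
  have hA : Nonempty A := Fintype.card_pos_iff.mp (by omega)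
  -- max degree
  have vtop : {S : Finset A // S.Nonempty} := ⟨Finset.univ, Finset.univ_nonempty⟩
  have hmax1 : 2 ^ n - 2 ≤ (setGraph A).maxDegree := by
    have := (setGraph A).degree_le_maxDegree ⟨Finset.univ, Finset.univ_nonempty⟩
    rw [key] at this
    simp only [Finset.card_univ] at this
    have h0 : (2:ℕ) ^ (n - Fintype.card A) = 1 := by
      have h00 : n - Fintype.card A = 0 := by omega
      rw [h00, pow_zero]
    omega
  have hmax2 : (setGraph A).maxDegree ≤ 2 ^ n - 2 :=
    SimpleGraph.maxDegree_le_of_forall_degree_le _ _ (fun v => (hb v).2)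
  -- min degree
  obtain ⟨a⟩ := hA
  haveI : Nonempty {S : Finset A // S.Nonempty} := ⟨⟨{a}, Finset.singleton_nonempty a⟩⟩
  have hmin1 : (setGraph A).minDegree ≤ 2 ^ (n - 1) - 1 := by
    have := (setGraph A).minDegree_le_degree ⟨{a}, Finset.singleton_nonempty a⟩
    rw [key] at this
    simp only [Finset.card_singleton] at this
    omega
  have hmin2 : 2 ^ (n - 1) - 1 ≤ (setGraph A).minDegree :=
    SimpleGraph.le_minDegree_of_forall_le_degree _ _ (fun v => (hb v).1)
  refine ⟨fun v => ⟨(hb v).1, ?_⟩, ?_⟩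
  · have := (hb v).2; omega
  · omega
end
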